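/- Let K be a nondegenerate triangle in ℝ², let r > 0, b ∈ ℝ², ε ∈ {+1, −1}, and let K' be the triangle with vertices p_i' = ε r p_i + b (which are again listed counterclockwise). Then γ^{ij}(K') = γ^{ij}(K) for all 1 ≤ i, j ≤ 4; in particular the constants γ^{ij} are invariant under translations, dilations and point reflections of the triangle, hence take the same value on all elements of a uniform triangulation and are independent of the mesh size. -/

import Mathlib

noncomputable section
open MeasureTheory

namespace PaperStmt

/-- Euclidean dot product on `ℝ²`. -/
def dotp (v w : ℝ × ℝ) : ℝ := v.1 * w.1 + v.2 * w.2

/-- Euclidean length on `ℝ²`. -/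
def len (v : ℝ × ℝ) : ℝ := Real.sqrt (v.1 ^ 2 + v.2 ^ 2)

/-- Cross product (determinant) of two planar vectors. -/
def crossp (v w : ℝ × ℝ) : ℝ := v.1 * w.2 - v.2 * w.1

/-- The vertices `p 0, p 1, p 2` form a nondegenerate triangle listed counterclockwise. -/
def Ccw (p : Fin 3 → ℝ × ℝ) : Prop := 0 < crossp (p 1 - p 0) (p 2 - p 0)

/-- Vector of the edge `e_i` opposite vertex `p i`, oriented counterclockwise
(from `p (i+1)` to `p (i−1)`). -/
def edgeVec (p : Fin 3 → ℝ × ℝ) (i : Fin 3) : ℝ × ℝ := p (i - 1) - p (i + 1)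

/-- Length `|e_i|` of the edge opposite vertex `p i`. -/
def elen (p : Fin 3 → ℝ × ℝ) (i : Fin 3) : ℝ := len (edgeVec p i)

/-- Unit tangent `t_i = (p_{i−1} − p_{i+1})/|e_i|` of edge `e_i`. -/
def tvec (p : Fin 3 → ℝ × ℝ) (i : Fin 3) : ℝ × ℝ := (elen p i)⁻¹ • edgeVec p i

/-- Outward unit normal `n_i` of edge `e_i` (clockwise rotation of the tangent,
which points outward for a counterclockwise triangle). -/
def nvec (p : Fin 3 → ℝ × ℝ) (i : Fin 3) : ℝ × ℝ := ((tvec p i).2, -(tvec p i).1)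

/-- Interior angle `θ_i` of the triangle at the vertex `p i`. -/
def angleAt (p : Fin 3 → ℝ × ℝ) (i : Fin 3) : ℝ :=
  Real.arccos (dotp (p (i + 1) - p i) (p (i - 1) - p i) /
    (len (p (i + 1) - p i) * len (p (i - 1) - p i)))

/-- Outer product `v wᵀ` of two planar (column) vectors, as a `2 × 2` matrix. -/
def outerProd (v w : ℝ × ℝ) : Matrix (Fin 2) (Fin 2) ℝ :=
  !![v.1 * w.1, v.1 * w.2; v.2 * w.1, v.2 * w.2]

/-- Basis matrices `φ_HHJ^i = −(1/(2 sin θ_{i−1} sin θ_{i+1})) (t_{i−1} t_{i+1}ᵀ + t_{i+1} t_{i−1}ᵀ)`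
of the lowest-order Hellan–Herrmann–Johnson element. -/
def phiHHJ (p : Fin 3 → ℝ × ℝ) (i : Fin 3) : Matrix (Fin 2) (Fin 2) ℝ :=
  (-(2 * Real.sin (angleAt p (i - 1)) * Real.sin (angleAt p (i + 1)))⁻¹) •
    (outerProd (tvec p (i - 1)) (tvec p (i + 1)) + outerProd (tvec p (i + 1)) (tvec p (i - 1)))

/-- The quadratic form `vᵀ τ v` of a `2 × 2` matrix on a planar vector. -/
def qf (τ : Matrix (Fin 2) (Fin 2) ℝ) (v : ℝ × ℝ) : ℝ :=
  v.1 * (τ 0 0 * v.1 + τ 0 1 * v.2) + v.2 * (τ 1 0 * v.1 + τ 1 1 * v.2)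

end PaperStmt

namespace PaperStmt

/-- Directional derivative of `f` along `v`. -/
def dderiv (v : ℝ × ℝ) (f : ℝ × ℝ → ℝ) : ℝ × ℝ → ℝ := fun x => fderiv ℝ f x v

/-- Second directional derivative `D²f[u, v]`. -/
def d2 (u v : ℝ × ℝ) (f : ℝ × ℝ → ℝ) : ℝ × ℝ → ℝ := dderiv u (dderiv v f)

/-- Third directional derivative `D³f[u, v, w]`. -/
def d3 (u v w : ℝ × ℝ) (f : ℝ × ℝ → ℝ) : ℝ × ℝ → ℝ := dderiv u (dderiv v (dderiv w f))

end PaperStmt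

namespace PaperStmt

/-- Area `|K|` of the (counterclockwise) triangle with vertices `p`. -/
def area (p : Fin 3 → ℝ × ℝ) : ℝ := crossp (p 1 - p 0) (p 2 - p 0) / 2

/-- Centroid `M_K` of the triangle with vertices `p`. -/
def centroid (p : Fin 3 → ℝ × ℝ) : ℝ × ℝ := (3 : ℝ)⁻¹ • (p 0 + p 1 + p 2)

/-- The (closed) triangle `K` with vertices `p`, as a subset of `ℝ²`. -/
def tri (p : Fin 3 → ℝ × ℝ) : Set (ℝ × ℝ) := convexHull ℝ {p 0, p 1, p 2}

/-- The cubic polynomials `φ₁, φ₂, φ₃, φ₄` centered at the centroid: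
`φ₁ = (x₁−M₁)³/(6|K|^{1/2})`, `φ₂ = (x₁−M₁)²(x₂−M₂)/(2|K|^{1/2})`,
`φ₃ = (x₁−M₁)(x₂−M₂)²/(2|K|^{1/2})`, `φ₄ = (x₂−M₂)³/(6|K|^{1/2})`. -/
def phiK (p : Fin 3 → ℝ × ℝ) : Fin 4 → ℝ × ℝ → ℝ :=
  ![fun x => (x.1 - (centroid p).1) ^ 3 / (6 * Real.sqrt (area p)),
    fun x => (x.1 - (centroid p).1) ^ 2 * (x.2 - (centroid p).2) / (2 * Real.sqrt (area p)),
    fun x => (x.1 - (centroid p).1) * (x.2 - (centroid p).2) ^ 2 / (2 * Real.sqrt (area p)),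
    fun x => (x.2 - (centroid p).2) ^ 3 / (6 * Real.sqrt (area p))]

/-- Hessian `∇²f` of a scalar function on `ℝ²`, as a `2 × 2` matrix field. -/
def hess (f : ℝ × ℝ → ℝ) (x : ℝ × ℝ) : Matrix (Fin 2) (Fin 2) ℝ :=
  !![d2 (1, 0) (1, 0) f x, d2 (1, 0) (0, 1) f x;
     d2 (0, 1) (1, 0) f x, d2 (0, 1) (0, 1) f x]

/-- Frobenius inner product `A : B` of two `2 × 2` matrices. -/
def frob (A B : Matrix (Fin 2) (Fin 2) ℝ) : ℝ := ∑ i : Fin 2, ∑ j : Fin 2, A i j * B i j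

/-- Mean value `(1/|e_j|) ∫_{e_j} g ds` of `g` over the edge `e_j` (with respect to
arclength measure), computed by the unit-speed-normalized parametrization of `e_j`. -/
def edgeAvg (p : Fin 3 → ℝ × ℝ) (j : Fin 3) (g : ℝ × ℝ → ℝ) : ℝ :=
  ∫ s in (0:ℝ)..1, g (p (j + 1) + s • (p (j - 1) - p (j + 1)))

/-- The Hellan–Herrmann–Johnson interpolant
`Π_HHJ τ = Σ_{j=1}^{3} ((1/|e_j|) ∫_{e_j} n_jᵀ τ n_j ds) φ_HHJ^j` of a
matrix-valued field `τ`, a constant symmetric matrix. -/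
def PiHHJ (p : Fin 3 → ℝ × ℝ) (τ : ℝ × ℝ → Matrix (Fin 2) (Fin 2) ℝ) :
    Matrix (Fin 2) (Fin 2) ℝ :=
  ∑ j : Fin 3, edgeAvg p j (fun x => qf (τ x) (nvec p j)) • phiHHJ p j

/-- The constants `γ^{ij} = (1/|K|) ∫_K ((I − Π_HHJ)∇²φ_i) : ((I − Π_HHJ)∇²φ_j) dx`. -/
def gammaHHJ (p : Fin 3 → ℝ × ℝ) (i j : Fin 4) : ℝ :=
  (area p)⁻¹ *
    ∫ x in tri p,
      frob (hess (phiK p i) x - PiHHJ p (hess (phiK p i)))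
           (hess (phiK p j) x - PiHHJ p (hess (phiK p j)))

/-- Coefficients `a₁ = |K|^{1/2} ∂³w/∂x₁³`, `a₂ = |K|^{1/2} ∂³w/∂x₁²∂x₂`,
`a₃ = |K|^{1/2} ∂³w/∂x₁∂x₂²`, `a₄ = |K|^{1/2} ∂³w/∂x₂³` (the third partial
derivatives of a cubic polynomial being constant, they are evaluated at `0`). -/
def acoef (p : Fin 3 → ℝ × ℝ) (w : ℝ × ℝ → ℝ) : Fin 4 → ℝ :=
  ![Real.sqrt (area p) * d3 (1, 0) (1, 0) (1, 0) w 0,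
    Real.sqrt (area p) * d3 (1, 0) (1, 0) (0, 1) w 0,
    Real.sqrt (area p) * d3 (1, 0) (0, 1) (0, 1) w 0,
    Real.sqrt (area p) * d3 (0, 1) (0, 1) (0, 1) w 0]

end PaperStmt

namespace AuxHHJ
open PaperStmt

/-! ### Derivatives of monomials -/

def mono (a c : ℝ) (m n : ℕ) : ℝ × ℝ → ℝ := fun x => (x.1 - a)^m * (x.2 - c)^n

lemma dderiv_kmono (k a c : ℝ) (m n : ℕ) (v : ℝ × ℝ) :
    dderiv v (fun x => k * mono a c m n x)
      = fun x => (k * m * v.1) * mono a c (m-1) n x + (k * n * v.2) * mono a c m (n-1) x := by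
  funext x
  have h1 : HasFDerivAt (fun y : ℝ × ℝ => (y.1 - a)^m)
      (((m:ℝ)*(x.1-a)^(m-1)) • ContinuousLinearMap.fst ℝ ℝ ℝ) x :=
    (hasDerivAt_pow m (x.1-a)).comp_hasFDerivAt x (hasFDerivAt_fst.sub_const a)
  have h2 : HasFDerivAt (fun y : ℝ × ℝ => (y.2 - c)^n)
      (((n:ℝ)*(x.2-c)^(n-1)) • ContinuousLinearMap.snd ℝ ℝ ℝ) x :=
    (hasDerivAt_pow n (x.2-c)).comp_hasFDerivAt x (hasFDerivAt_snd.sub_const c)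
  have h : HasFDerivAt (fun x => k * mono a c m n x) _ x := (h1.mul h2).const_mul k
  simp only [dderiv, h.fderiv]
  simp [mono]
  ring

lemma d1x (k a c : ℝ) (m n : ℕ) :
    dderiv (1,0) (fun x => k * mono a c m n x) = fun x => (k * m) * mono a c (m-1) n x := by
  rw [dderiv_kmono]; funext x; norm_num

lemma d1y (k a c : ℝ) (m n : ℕ) :
    dderiv (0,1) (fun x => k * mono a c m n x) = fun x => (k * n) * mono a c m (n-1) x := by
  rw [dderiv_kmono]; funext x; norm_num

lemma hess_kmono (k a c : ℝ) (m n : ℕ) (x : ℝ × ℝ) :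
    hess (fun x => k * mono a c m n x) x =
      !![(k * m * (m-1:ℕ)) * mono a c (m-1-1) n x, (k * n * m) * mono a c (m-1) (n-1) x;
         (k * m * n) * mono a c (m-1) (n-1) x, (k * n * (n-1:ℕ)) * mono a c m (n-1-1) x] := by
  simp only [hess, d2, d1x, d1y]

/-! ### Hessians of the four cubic shapes -/

lemma hess0 (a s : ℝ) (x : ℝ × ℝ) :
    hess (fun y => (y.1 - a)^3 / (6 * s)) x = !![s⁻¹ * (x.1 - a), 0; 0, 0] := by
  have h : (fun y : ℝ × ℝ => (y.1 - a)^3 / (6 * s))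
      = fun y => (6 * s)⁻¹ * mono a 0 3 0 y := by
    funext y; simp [mono]; ring
  rw [h, hess_kmono]
  ext i j
  fin_cases i <;> fin_cases j <;> norm_num [mono, -mul_eq_mul_right_iff] <;> ring1

lemma hess1 (a c s : ℝ) (x : ℝ × ℝ) :
    hess (fun y => (y.1 - a)^2 * (y.2 - c) / (2 * s)) x
      = !![s⁻¹ * (x.2 - c), s⁻¹ * (x.1 - a); s⁻¹ * (x.1 - a), 0] := by
  have h : (fun y : ℝ × ℝ => (y.1 - a)^2 * (y.2 - c) / (2 * s))
      = fun y => (2 * s)⁻¹ * mono a c 2 1 y := by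
    funext y; simp [mono]; ring
  rw [h, hess_kmono]
  ext i j
  fin_cases i <;> fin_cases j <;> norm_num [mono, -mul_eq_mul_right_iff] <;> ring1

lemma hess2 (a c s : ℝ) (x : ℝ × ℝ) :
    hess (fun y => (y.1 - a) * (y.2 - c)^2 / (2 * s)) x
      = !![0, s⁻¹ * (x.2 - c); s⁻¹ * (x.2 - c), s⁻¹ * (x.1 - a)] := by
  have h : (fun y : ℝ × ℝ => (y.1 - a) * (y.2 - c)^2 / (2 * s))
      = fun y => (2 * s)⁻¹ * mono a c 1 2 y := by
    funext y; simp [mono]; ring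
  rw [h, hess_kmono]
  ext i j
  fin_cases i <;> fin_cases j <;> norm_num [mono, -mul_eq_mul_right_iff] <;> ring1

lemma hess3 (c s : ℝ) (x : ℝ × ℝ) :
    hess (fun y => (y.2 - c)^3 / (6 * s)) x = !![0, 0; 0, s⁻¹ * (x.2 - c)] := by
  have h : (fun y : ℝ × ℝ => (y.2 - c)^3 / (6 * s))
      = fun y => (6 * s)⁻¹ * mono 0 c 0 3 y := by
    funext y; simp [mono]; ring
  rw [h, hess_kmono]
  ext i j
  fin_cases i <;> fin_cases j <;> norm_num [mono, -mul_eq_mul_right_iff] <;> ring1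

/-! ### Geometry of the scaled triangle -/

section Geo

variable (p : Fin 3 → ℝ × ℝ) (r b1 b2 ε : ℝ)

lemma crossp_smul (c : ℝ) (u v : ℝ × ℝ) : crossp (c • u) (c • v) = c^2 * crossp u v := by
  simp [crossp, Prod.smul_fst, Prod.smul_snd, smul_eq_mul]; ring

lemma dotp_smul (c : ℝ) (u v : ℝ × ℝ) : dotp (c • u) (c • v) = c^2 * dotp u v := by
  simp [dotp, Prod.smul_fst, Prod.smul_snd, smul_eq_mul]; ring

lemma len_smul (c : ℝ) (u : ℝ × ℝ) : len (c • u) = |c| * len u := by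
  simp only [len, Prod.smul_fst, Prod.smul_snd, smul_eq_mul]
  rw [show (c * u.1)^2 + (c * u.2)^2 = c^2 * (u.1^2 + u.2^2) by ring,
    Real.sqrt_mul (sq_nonneg c), Real.sqrt_sq_eq_abs]

variable (c : ℝ) (b : ℝ × ℝ)

lemma sub_scaled (k l : Fin 3) :
    (fun k => c • p k + b) k - (fun k => c • p k + b) l = c • (p k - p l) := by
  simp [smul_sub]

end Geo

/-! ### Scaled triangle -/

section Main

variable (p : Fin 3 → ℝ × ℝ) (r : ℝ) (b : ℝ × ℝ) (ε : ℝ)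

lemma sub_affine (c : ℝ) (u v w : ℝ × ℝ) : (c • u + w) - (c • v + w) = c • (u - v) := by
  rw [smul_sub]; abel

lemma area_scaled (hε2 : ε^2 = 1) :
    area (fun k => (ε * r) • p k + b) = r^2 * area p := by
  simp only [area, sub_affine, crossp_smul, mul_pow, hε2, one_mul]
  ring

lemma ccw_scaled (hp : Ccw p) (hr : 0 < r) (hε2 : ε^2 = 1) :
    Ccw (fun k => (ε * r) • p k + b) := by
  unfold Ccw at hp ⊢
  simp only [sub_affine, crossp_smul, mul_pow, hε2, one_mul]
  positivity

lemma sqrt_area_scaled (hr : 0 < r) (hε2 : ε^2 = 1) :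
    Real.sqrt (area (fun k => (ε * r) • p k + b)) = r * Real.sqrt (area p) := by
  rw [area_scaled p r b ε hε2, Real.sqrt_mul (sq_nonneg r), Real.sqrt_sq hr.le]

lemma centroid_scaled :
    centroid (fun k => (ε * r) • p k + b) = (ε * r) • centroid p + b := by
  simp only [centroid]
  module

lemma edgeVec_scaled (i : Fin 3) :
    edgeVec (fun k => (ε * r) • p k + b) i = (ε * r) • edgeVec p i := by
  simp only [edgeVec, sub_affine]

lemma elen_scaled (habs : |ε * r| = r) (i : Fin 3) :
    elen (fun k => (ε * r) • p k + b) i = r * elen p i := by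
  rw [elen, edgeVec_scaled, len_smul, habs, elen]

lemma tvec_scaled (hr : 0 < r) (habs : |ε * r| = r) (i : Fin 3) :
    tvec (fun k => (ε * r) • p k + b) i = ε • tvec p i := by
  rw [tvec, elen_scaled p r b ε habs, edgeVec_scaled, tvec, smul_smul, smul_smul]
  congr 1
  rw [mul_inv]
  field_simp

lemma nvec_scaled (hr : 0 < r) (habs : |ε * r| = r) (i : Fin 3) :
    nvec (fun k => (ε * r) • p k + b) i = ε • nvec p i := by
  rw [nvec, tvec_scaled p r b ε hr habs, nvec]
  ext <;> simp [Prod.smul_fst, Prod.smul_snd, smul_eq_mul] <;> ring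

lemma angle_scaled (hr : 0 < r) (hε2 : ε^2 = 1) (i : Fin 3) :
    angleAt (fun k => (ε * r) • p k + b) i = angleAt p i := by
  unfold angleAt
  simp only [sub_affine, dotp_smul, len_smul]
  have habs : |ε * r| ^ 2 = r ^ 2 := by rw [sq_abs, mul_pow, hε2, one_mul]
  congr 1
  rw [show |ε * r| * len (p (i + 1) - p i) * (|ε * r| * len (p (i - 1) - p i))
      = |ε * r|^2 * (len (p (i + 1) - p i) * len (p (i - 1) - p i)) by ring,
    habs, mul_pow, hε2, one_mul,
    mul_div_mul_left _ _ (pow_ne_zero 2 hr.ne')]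

lemma outer_smul_smul (u v : ℝ × ℝ) :
    outerProd (ε • u) (ε • v) = (ε^2) • outerProd u v := by
  ext i j
  fin_cases i <;> fin_cases j <;>
    simp [outerProd, Prod.smul_fst, Prod.smul_snd, smul_eq_mul] <;> ring

lemma outer_sym_scaled (hε2 : ε^2 = 1) (u v : ℝ × ℝ) :
    outerProd (ε • u) (ε • v) + outerProd (ε • v) (ε • u)
      = outerProd u v + outerProd v u := by
  rw [outer_smul_smul, outer_smul_smul, hε2, one_smul, one_smul]

lemma phiHHJ_scaled (hr : 0 < r) (hε2 : ε^2 = 1) (habs : |ε * r| = r) (i : Fin 3) :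
    phiHHJ (fun k => (ε * r) • p k + b) i = phiHHJ p i := by
  unfold phiHHJ
  rw [angle_scaled p r b ε hr hε2, angle_scaled p r b ε hr hε2,
    tvec_scaled p r b ε hr habs, tvec_scaled p r b ε hr habs,
    outer_sym_scaled ε hε2]

lemma hess_phiK_scaled (hr : 0 < r) (hε2 : ε^2 = 1) (hA : 0 < area p) (i : Fin 4) (x : ℝ × ℝ) :
    hess (phiK (fun k => (ε * r) • p k + b) i) ((ε * r) • x + b)
      = ε • hess (phiK p i) x := by
  have hs : Real.sqrt (area p) ≠ 0 := (Real.sqrt_pos.mpr hA).ne'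
  have hr' : r ≠ 0 := hr.ne'
  have hQ := sqrt_area_scaled p r b ε hr hε2
  have hM := centroid_scaled p r b ε
  have h1 : ((ε * r) • x + b).1 - (centroid (fun k => (ε * r) • p k + b)).1
      = ε * r * (x.1 - (centroid p).1) := by
    rw [hM]; simp [Prod.smul_fst, smul_eq_mul]; ring
  have h2 : ((ε * r) • x + b).2 - (centroid (fun k => (ε * r) • p k + b)).2
      = ε * r * (x.2 - (centroid p).2) := by
    rw [hM]; simp [Prod.smul_snd, smul_eq_mul]; ring
  fin_cases i
  · show hess (fun y => (y.1 - (centroid (fun k => (ε * r) • p k + b)).1)^3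
        / (6 * Real.sqrt (area (fun k => (ε * r) • p k + b)))) ((ε * r) • x + b)
      = ε • hess (fun y => (y.1 - (centroid p).1)^3 / (6 * Real.sqrt (area p))) x
    rw [hess0, hess0, h1, hQ]
    ext a' b'
    fin_cases a' <;> fin_cases b' <;>
      (simp [Matrix.smul_apply]; try field_simp; try ring1)
  · show hess (fun y => (y.1 - (centroid (fun k => (ε * r) • p k + b)).1)^2
        * (y.2 - (centroid (fun k => (ε * r) • p k + b)).2)
        / (2 * Real.sqrt (area (fun k => (ε * r) • p k + b)))) ((ε * r) • x + b)
      = ε • hess (fun y => (y.1 - (centroid p).1)^2 * (y.2 - (centroid p).2)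
        / (2 * Real.sqrt (area p))) x
    rw [hess1, hess1, h1, h2, hQ]
    ext a' b'
    fin_cases a' <;> fin_cases b' <;>
      (simp [Matrix.smul_apply]; try field_simp; try ring1)
  · show hess (fun y => (y.1 - (centroid (fun k => (ε * r) • p k + b)).1)
        * (y.2 - (centroid (fun k => (ε * r) • p k + b)).2)^2
        / (2 * Real.sqrt (area (fun k => (ε * r) • p k + b)))) ((ε * r) • x + b)
      = ε • hess (fun y => (y.1 - (centroid p).1) * (y.2 - (centroid p).2)^2
        / (2 * Real.sqrt (area p))) x
    rw [hess2, hess2, h1, h2, hQ]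
    ext a' b'
    fin_cases a' <;> fin_cases b' <;>
      (simp [Matrix.smul_apply]; try field_simp; try ring1)
  · show hess (fun y => (y.2 - (centroid (fun k => (ε * r) • p k + b)).2)^3
        / (6 * Real.sqrt (area (fun k => (ε * r) • p k + b)))) ((ε * r) • x + b)
      = ε • hess (fun y => (y.2 - (centroid p).2)^3 / (6 * Real.sqrt (area p))) x
    rw [hess3, hess3, h2, hQ]
    ext a' b'
    fin_cases a' <;> fin_cases b' <;>
      (simp [Matrix.smul_apply]; try field_simp; try ring1)

lemma qf_smul_smul (hε2 : ε^2 = 1) (τ : Matrix (Fin 2) (Fin 2) ℝ) (v : ℝ × ℝ) :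
    qf (ε • τ) (ε • v) = ε * qf τ v := by
  have h : qf (ε • τ) (ε • v) = ε^3 * qf τ v := by
    simp only [qf, Matrix.smul_apply, Prod.smul_fst, Prod.smul_snd, smul_eq_mul]
    ring
  rw [h, pow_succ, hε2, one_mul]

lemma frob_smul_smul (A B : Matrix (Fin 2) (Fin 2) ℝ) (hε2 : ε^2 = 1) :
    frob (ε • A) (ε • B) = frob A B := by
  simp only [frob, Matrix.smul_apply, smul_eq_mul, Fin.sum_univ_two]
  linear_combination (A 0 0 * B 0 0 + A 0 1 * B 0 1 + A 1 0 * B 1 0 + A 1 1 * B 1 1) * hε2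

lemma edgeAvg_scaled (j : Fin 3) (g : ℝ × ℝ → ℝ) :
    edgeAvg (fun k => (ε * r) • p k + b) j g
      = edgeAvg p j (fun x => g ((ε * r) • x + b)) := by
  unfold edgeAvg
  congr 1
  funext s
  congr 1
  module

lemma edgeAvg_const_mul (j : Fin 3) (c : ℝ) (g : ℝ × ℝ → ℝ) :
    edgeAvg p j (fun x => c * g x) = c * edgeAvg p j g :=
  intervalIntegral.integral_const_mul c _

lemma PiHHJ_scaled (hr : 0 < r) (hε2 : ε^2 = 1) (habs : |ε * r| = r) (hA : 0 < area p)
    (i : Fin 4) :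
    PiHHJ (fun k => (ε * r) • p k + b)
        (hess (phiK (fun k => (ε * r) • p k + b) i))
      = ε • PiHHJ p (hess (phiK p i)) := by
  unfold PiHHJ
  rw [Finset.smul_sum]
  refine Finset.sum_congr rfl fun j _ => ?_
  rw [phiHHJ_scaled p r b ε hr hε2 habs]
  have hAvg : edgeAvg (fun k => (ε * r) • p k + b) j
      (fun x => qf (hess (phiK (fun k => (ε * r) • p k + b) i) x)
        (nvec (fun k => (ε * r) • p k + b) j))
      = ε * edgeAvg p j (fun x => qf (hess (phiK p i) x) (nvec p j)) := by
    have hfun : (fun x => qf (hess (phiK (fun k => (ε * r) • p k + b) i) ((ε * r) • x + b))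
        (nvec (fun k => (ε * r) • p k + b) j))
        = fun x => ε * qf (hess (phiK p i) x) (nvec p j) := by
      funext x
      rw [nvec_scaled p r b ε hr habs, hess_phiK_scaled p r b ε hr hε2 hA,
        qf_smul_smul ε hε2]
    refine (edgeAvg_scaled p r b ε j _).trans ?_
    beta_reduce
    rw [hfun]
    exact edgeAvg_const_mul p j ε _
  rw [hAvg, mul_smul]

/-- The affine scaling map. -/
def affT (c : ℝ) (b : ℝ × ℝ) : (ℝ × ℝ) →ᵃ[ℝ] (ℝ × ℝ) where
  toFun := fun x => c • x + b
  linear := c • LinearMap.id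
  map_vadd' := by
    intro x v
    simp only [LinearMap.smul_apply, LinearMap.id_apply]
    rw [vadd_eq_add, vadd_eq_add, smul_add]
    abel

lemma tri_scaled :
    tri (fun k => (ε * r) • p k + b) = (fun x => (ε * r) • x + b) '' tri p := by
  have h : tri (fun k => (ε * r) • p k + b)
      = convexHull ℝ (affT (ε * r) b '' {p 0, p 1, p 2}) := by
    unfold tri
    congr 1
    simp [Set.image_insert_eq, affT]
  rw [h, ← AffineMap.image_convexHull]
  rfl

end Main

end AuxHHJ

open PaperStmt in
/-- The constants `γ^{ij}` are invariant under translations, dilations and point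
reflections of the triangle: if `p_i' = ε r p_i + b` with `r > 0` and `ε = ±1`, the new
vertices are again counterclockwise and `γ^{ij}(K') = γ^{ij}(K)` for all `1 ≤ i, j ≤ 4`. -/
theorem gammaHHJ_invariant
    (p : Fin 3 → ℝ × ℝ) (hp : Ccw p)
    (r : ℝ) (hr : 0 < r) (b : ℝ × ℝ) (ε : ℝ) (hε : ε = 1 ∨ ε = -1) :
    Ccw (fun k => (ε * r) • p k + b) ∧
    ∀ i j : Fin 4, gammaHHJ (fun k => (ε * r) • p k + b) i j = gammaHHJ p i j := by
  have hε2 : ε ^ 2 = 1 := by rcases hε with h | h <;> rw [h] <;> norm_num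
  have habs : |ε * r| = r := by
    rcases hε with h | h <;> rw [h] <;>
      simp [abs_of_pos hr, abs_of_nonneg hr.le]
  have hA : 0 < area p := by
    unfold Ccw at hp; unfold area; linarith
  have hc : (ε * r) ≠ 0 := by
    intro h
    rw [h] at habs
    simp at habs
    exact hr.ne' habs.symm
  refine ⟨AuxHHJ.ccw_scaled p r b ε hp hr hε2, fun i j => ?_⟩
  have hmeas : MeasurableSet (tri p) := by
    have hfin : ({p 0, p 1, p 2} : Set (ℝ × ℝ)).Finite :=
      (Set.finite_singleton _).insert _ |>.insert _
    exact (hfin.isCompact_convexHull ℝ).measurableSet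
  have hder : ∀ x ∈ tri p, HasFDerivWithinAt (fun x => (ε * r) • x + b)
      ((ε * r) • ContinuousLinearMap.id ℝ (ℝ × ℝ)) (tri p) x := fun x _ =>
    (((hasFDerivAt_id x).const_smul (ε * r)).add_const b).hasFDerivWithinAt
  have hinj : Set.InjOn (fun x => (ε * r) • x + b) (tri p) := by
    intro x _ y _ hxy
    simp only [add_left_inj] at hxy
    exact smul_right_injective (ℝ × ℝ) hc hxy
  have hdet : |((ε * r) • ContinuousLinearMap.id ℝ (ℝ × ℝ)).det| = r ^ 2 := by
    have : ((ε * r) • ContinuousLinearMap.id ℝ (ℝ × ℝ)).det = (ε * r) ^ 2 := by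
      simp [ContinuousLinearMap.det]
    rw [this, mul_pow, hε2, one_mul, abs_of_nonneg (sq_nonneg r)]
  have hpt : ∀ x : ℝ × ℝ,
      |((ε * r) • ContinuousLinearMap.id ℝ (ℝ × ℝ)).det| •
        frob (hess (phiK (fun k => (ε * r) • p k + b) i) ((ε * r) • x + b)
              - PiHHJ (fun k => (ε * r) • p k + b)
                  (hess (phiK (fun k => (ε * r) • p k + b) i)))
             (hess (phiK (fun k => (ε * r) • p k + b) j) ((ε * r) • x + b)
              - PiHHJ (fun k => (ε * r) • p k + b)
                  (hess (phiK (fun k => (ε * r) • p k + b) j)))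
      = r ^ 2 * frob (hess (phiK p i) x - PiHHJ p (hess (phiK p i)))
          (hess (phiK p j) x - PiHHJ p (hess (phiK p j))) := by
    intro x
    rw [hdet, AuxHHJ.hess_phiK_scaled p r b ε hr hε2 hA i,
      AuxHHJ.hess_phiK_scaled p r b ε hr hε2 hA j,
      AuxHHJ.PiHHJ_scaled p r b ε hr hε2 habs hA i,
      AuxHHJ.PiHHJ_scaled p r b ε hr hε2 habs hA j,
      ← smul_sub, ← smul_sub, AuxHHJ.frob_smul_smul ε _ _ hε2, smul_eq_mul]
  have h1 : (∫ x in (fun x => (ε * r) • x + b) '' tri p,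
        frob (hess (phiK (fun k => (ε * r) • p k + b) i) x
              - PiHHJ (fun k => (ε * r) • p k + b)
                  (hess (phiK (fun k => (ε * r) • p k + b) i)))
             (hess (phiK (fun k => (ε * r) • p k + b) j) x
              - PiHHJ (fun k => (ε * r) • p k + b)
                  (hess (phiK (fun k => (ε * r) • p k + b) j))))
      = r ^ 2 * ∫ x in tri p,
          frob (hess (phiK p i) x - PiHHJ p (hess (phiK p i)))
            (hess (phiK p j) x - PiHHJ p (hess (phiK p j))) := by
    rw [MeasureTheory.integral_image_eq_integral_abs_det_fderiv_smul
      MeasureTheory.volume hmeas hder hinj, ← MeasureTheory.integral_const_mul]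
    exact MeasureTheory.setIntegral_congr_fun hmeas (fun x _ => hpt x)
  unfold gammaHHJ
  rw [AuxHHJ.area_scaled p r b ε hε2, AuxHHJ.tri_scaled p r b ε, h1, mul_inv,
    mul_comm ((r ^ 2)⁻¹) ((area p)⁻¹), mul_assoc, ← mul_assoc ((r ^ 2)⁻¹),
    inv_mul_cancel₀ (pow_ne_zero 2 hr.ne'), one_mul]
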